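/- Let an engineerable directed graph with height assignment hgt be given, and suppose s_1 and s_2 are distinct vertices that are both targets (every incident edge points toward them), or both sources (every incident edge points away). If s_1 and s_2 are connected by a path, then dist(s_1, s_2) > |hgt(s_1) − hgt(s_2)|. -/

import Mathlib

/-- A finite directed (multi)graph is given by `src tgt : E → V`.
A step traverses an edge either forward (`true`) or backward (`false`). -/
def stepSrc {V E : Type*} (src tgt : E → V) (s : E × Bool) : V :=
  if s.2 then src s.1 else tgt s.1

def stepTgt {V E : Type*} (src tgt : E → V) (s : E × Bool) : V :=
  if s.2 then tgt s.1 else src s.1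

/-- `IsPath src tgt a b p`: the list of steps `p` forms a path from `a` to `b`
(edges may be traversed in either direction). -/
def IsPath {V E : Type*} (src tgt : E → V) : V → V → List (E × Bool) → Prop
  | a, b, [] => a = b
  | a, b, s :: p => stepSrc src tgt s = a ∧ IsPath src tgt (stepTgt src tgt s) b p

/-- Net ascent: number of edges traversed forward minus number traversed backward. -/
def netAscent {V E : Type*} (_src _tgt : E → V) (p : List (E × Bool)) : ℤ :=
  (p.countP (fun s => s.2) : ℤ) - (p.countP (fun s => !s.2) : ℤ)

/-- Engineerable: any two paths between the same pair of vertices have equal net ascent. -/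
def Engineerable {V E : Type*} (src tgt : E → V) : Prop :=
  ∀ a b p q, IsPath src tgt a b p → IsPath src tgt a b q →
    netAscent src tgt p = netAscent src tgt q

/-- A height assignment: increases by exactly 1 along each directed edge. -/
def IsHeight {V E : Type*} (src tgt : E → V) (hgt : V → ℤ) : Prop :=
  ∀ e, hgt (tgt e) = hgt (src e) + 1

/-- A target: every incident edge is directed toward it. -/
def IsTarget {V E : Type*} (src tgt : E → V) (v : V) : Prop :=
  ∀ e, src e = v → tgt e = v

/-- A source: every incident edge is directed away from it. -/
def IsSource {V E : Type*} (src tgt : E → V) (v : V) : Prop :=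
  ∀ e, tgt e = v → src e = v

lemma path_height {V E : Type*} (src tgt : E → V) (hgt : V → ℤ)
    (hh : IsHeight src tgt hgt) :
    ∀ (p : List (E × Bool)) (a b : V), IsPath src tgt a b p →
      hgt b - hgt a = netAscent src tgt p := by
  intro p
  induction p with
  | nil => intro a b h; cases h; simp [netAscent]
  | cons s p ih =>
    intro a b h
    obtain ⟨h1, h2⟩ := h
    have := ih _ _ h2
    have hs : hgt (stepTgt src tgt s) - hgt (stepSrc src tgt s) =
        if s.2 then 1 else -1 := by
      unfold stepSrc stepTgt
      cases s.2 <;> simp [hh s.1]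
    subst h1
    simp only [netAscent, List.countP_cons] at *
    cases hb : s.2 <;> simp [hb] at hs ⊢ <;> push_cast <;> omega

lemma exists_true_step {V E : Type*} (src tgt : E → V) (hgt : V → ℤ)
    (hh : IsHeight src tgt hgt) (s₂ : V) (ht : IsTarget src tgt s₂) :
    ∀ (p : List (E × Bool)) (a : V), IsPath src tgt a s₂ p → a ≠ s₂ →
      ∃ s ∈ p, s.2 = true := by
  intro p
  induction p with
  | nil => intro a h hne; exact absurd h hne
  | cons s p ih =>
    intro a h hne
    obtain ⟨h1, h2⟩ := h
    by_cases hc : stepTgt src tgt s = s₂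
    · cases hb : s.2 with
      | false =>
        exfalso
        simp [stepTgt, hb] at hc
        have h3 := ht s.1 hc
        have h4 := hh s.1
        rw [hc, h3] at h4
        omega
      | true => exact ⟨s, List.mem_cons_self, hb⟩
    · obtain ⟨t, ht', hb⟩ := ih _ h2 hc
      exact ⟨t, List.mem_cons_of_mem _ ht', hb⟩

lemma exists_false_step {V E : Type*} (src tgt : E → V) (hgt : V → ℤ)
    (hh : IsHeight src tgt hgt) (s₂ : V) (ht : IsSource src tgt s₂) :
    ∀ (p : List (E × Bool)) (a : V), IsPath src tgt a s₂ p → a ≠ s₂ →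
      ∃ s ∈ p, s.2 = false := by
  intro p
  induction p with
  | nil => intro a h hne; exact absurd h hne
  | cons s p ih =>
    intro a h hne
    obtain ⟨h1, h2⟩ := h
    by_cases hc : stepTgt src tgt s = s₂
    · cases hb : s.2 with
      | true =>
        exfalso
        simp [stepTgt, hb] at hc
        have h3 := ht s.1 hc
        have h4 := hh s.1
        rw [hc, h3] at h4
        omega
      | false => exact ⟨s, List.mem_cons_self, hb⟩
    · obtain ⟨t, ht', hb⟩ := ih _ h2 hc
      exact ⟨t, List.mem_cons_of_mem _ ht', hb⟩

/-- Two distinct vertices that are both targets or both sources, connected by a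
path, are at distance strictly greater than their absolute height difference: every path
joining them is strictly longer than |hgt s₁ − hgt s₂|. -/
theorem stmt5 {V E : Type*} [Fintype V] [Fintype E] (src tgt : E → V)
    (heng : Engineerable src tgt)
    (hgt : V → ℤ) (hh : IsHeight src tgt hgt)
    (s₁ s₂ : V) (hne : s₁ ≠ s₂)
    (hts : (IsTarget src tgt s₁ ∧ IsTarget src tgt s₂) ∨
           (IsSource src tgt s₁ ∧ IsSource src tgt s₂))
    (hconn : ∃ p, IsPath src tgt s₁ s₂ p) :
    ∀ p : List (E × Bool), IsPath src tgt s₁ s₂ p →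
      |hgt s₁ - hgt s₂| < (p.length : ℤ) := by
  intro p hp
  have hheight := path_height src tgt hgt hh p s₁ s₂ hp
  have hF : ∃ s ∈ p, s.2 = true := by
    rcases hts with ⟨ht1, ht2⟩ | ⟨hs1, hs2⟩
    · exact exists_true_step src tgt hgt hh s₂ ht2 p s₁ hp hne
    · -- s₁ source: first step must be forward
      cases p with
      | nil => exact absurd hp hne
      | cons s q =>
        obtain ⟨h1, _⟩ := hp
        cases hb : s.2 with
        | true => exact ⟨s, List.mem_cons_self, hb⟩
        | false =>
          exfalso
          simp [stepSrc, hb] at h1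
          have h3 := hs1 s.1 h1
          have h4 := hh s.1
          rw [h1, h3] at h4
          omega
  have hB : ∃ s ∈ p, s.2 = false := by
    rcases hts with ⟨ht1, ht2⟩ | ⟨hs1, hs2⟩
    · -- s₁ target: first step must be backward
      cases p with
      | nil => exact absurd hp hne
      | cons s q =>
        obtain ⟨h1, _⟩ := hp
        cases hb : s.2 with
        | false => exact ⟨s, List.mem_cons_self, hb⟩
        | true =>
          exfalso
          simp [stepSrc, hb] at h1
          have h3 := ht1 s.1 h1
          have h4 := hh s.1
          rw [h1, h3] at h4
          omega
    · exact exists_false_step src tgt hgt hh s₂ hs2 p s₁ hp hne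
  have hFc : 0 < p.countP (fun s => s.2) := by
    obtain ⟨s, hs, hb⟩ := hF
    exact List.countP_pos_iff.mpr ⟨s, hs, hb⟩
  have hBc : 0 < p.countP (fun s => !s.2) := by
    obtain ⟨s, hs, hb⟩ := hB
    exact List.countP_pos_iff.mpr ⟨s, hs, by simp [hb]⟩
  have hlen : p.length = p.countP (fun s => s.2) + p.countP (fun s => !s.2) := by
    have := List.length_eq_countP_add_countP (fun s : E × Bool => s.2) (l := p)
    simpa using this
  unfold netAscent at hheight
  rw [abs_lt]
  omega
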